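/- Let φ : D → ℂ be a smooth map on the closed unit disk satisfying ∂̄φ = σ for a constant σ ∈ ℂ (i.e. ∂φ/∂x + i ∂φ/∂y = 2σ), and suppose |φ(ζ)| ≤ R for all ζ ∈ ∂D. Then |σ| ≤ R. -/

import Mathlib

open Complex Metric Set

/-- If `φ : D → ℂ` is a smooth map on the closed unit disk with
`∂̄φ = σ` constant (i.e. `∂φ/∂x + i ∂φ/∂y = 2σ`) and `|φ| ≤ R` on `∂D`, then `|σ| ≤ R`. -/
theorem stmt_8 (φ : ℂ → ℂ) (hφ : ContDiff ℝ 1 φ) (σ : ℂ) (R : ℝ)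
    (hdbar : ∀ ζ ∈ Metric.closedBall (0 : ℂ) 1,
      fderiv ℝ φ ζ 1 + Complex.I * fderiv ℝ φ ζ Complex.I = 2 * σ)
    (hbdry : ∀ ζ ∈ Metric.sphere (0 : ℂ) 1, ‖φ ζ‖ ≤ R) :
    ‖σ‖ ≤ R := by
  set g : ℂ → ℂ := fun z => φ z - σ * (starRingEnd ℂ) z with hg
  have hconj : Differentiable ℝ fun z : ℂ => σ * (starRingEnd ℂ) z := by
    exact (differentiable_const σ).mul Complex.conjCLE.differentiable
  have hφd : Differentiable ℝ φ := hφ.differentiable one_ne_zero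
  have hgd : Differentiable ℝ g := hφd.sub hconj
  have hgc : Continuous g := hgd.continuous
  -- g is complex differentiable on the ball
  have hdiff : ∀ z ∈ ball (0 : ℂ) 1, DifferentiableAt ℂ g z := by
    intro z hz
    have hzc : z ∈ closedBall (0 : ℂ) 1 := ball_subset_closedBall hz
    have hL : HasFDerivAt g (fderiv ℝ g z) z := (hgd z).hasFDerivAt
    set L := fderiv ℝ g z with hLdef
    have hfconj : HasFDerivAt (fun z : ℂ => σ * (starRingEnd ℂ) z)
        (σ • (Complex.conjCLE : ℂ ≃L[ℝ] ℂ).toContinuousLinearMap) z := by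
      exact (Complex.conjCLE.hasFDerivAt (x := z)).const_smul σ
    have hLeq : L = fderiv ℝ φ z - σ • (Complex.conjCLE : ℂ ≃L[ℝ] ℂ).toContinuousLinearMap := by
      rw [hLdef, hg]
      exact ((hφd z).hasFDerivAt.sub hfconj).fderiv
    have hL1 : L 1 = fderiv ℝ φ z 1 - σ := by
      simp [hLeq, Complex.conjCLE_apply]
    have hLI : L Complex.I = fderiv ℝ φ z Complex.I + σ * Complex.I := by
      simp [hLeq, Complex.conjCLE_apply, smul_eq_mul]
    have key : L Complex.I = Complex.I * L 1 := by
      rw [hLI, hL1]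
      linear_combination (-Complex.I) * hdbar z hzc
        + (fderiv ℝ φ z Complex.I) * Complex.I_mul_I
    have hlin : ∀ w : ℂ, L w = w * L 1 := by
      intro w
      have hw : w = w.re • (1 : ℂ) + w.im • Complex.I := by
        rw [Complex.real_smul, Complex.real_smul, mul_one]
        exact (Complex.re_add_im w).symm
      conv_lhs => rw [hw]
      rw [map_add, map_smul, map_smul, key, Complex.real_smul, Complex.real_smul]
      conv_rhs => rw [← Complex.re_add_im w]
      ring
    exact ⟨(L 1) • ContinuousLinearMap.id ℂ ℂ,
      hasFDerivAt_of_restrictScalars ℝ hL (by ext w; simp [hlin w]; ring)⟩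
  -- Cauchy-Goursat: ∮ g = 0
  have hzero : (∮ z in C((0:ℂ), 1), g z) = 0 :=
    circleIntegral_eq_zero_of_differentiable_on_off_countable zero_le_one Set.countable_empty
      hgc.continuousOn (fun z hz => hdiff z hz.1)
  -- ∮ σ * conj z = 2πiσ
  have hconjint : (∮ z in C((0:ℂ), 1), σ * (starRingEnd ℂ) z) = 2 * Real.pi * Complex.I * σ := by
    have h1 : (∮ z in C((0:ℂ), 1), σ * (starRingEnd ℂ) z)
        = ∮ z in C((0:ℂ), 1), σ * (z - 0)⁻¹ := by
      apply circleIntegral.integral_congr zero_le_one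
      intro z hz
      have hz1 : ‖z‖ = 1 := by simpa using hz
      have hc : (starRingEnd ℂ) z = z⁻¹ := by
        rw [Complex.inv_def]
        simp [Complex.normSq_eq_norm_sq, hz1]
      simp [hc]
    rw [h1, circleIntegral.integral_const_mul,
      circleIntegral.integral_sub_inv_of_mem_ball (by simp : (0:ℂ) ∈ ball (0:ℂ) 1)]
    ring
  have hint2 : CircleIntegrable (fun z => σ * (starRingEnd ℂ) z) 0 1 :=
    (hconj.continuous.continuousOn).circleIntegrable zero_le_one
  have hφint2 : CircleIntegrable φ 0 1 :=
    hφd.continuous.continuousOn.circleIntegrable zero_le_one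
  have hφint : (∮ z in C((0:ℂ), 1), φ z) = 2 * Real.pi * Complex.I * σ := by
    have hsub := circleIntegral.integral_sub hφint2 hint2
    rw [← hg, hzero] at hsub
    have h := sub_eq_zero.mp hsub.symm
    rw [h]
    exact hconjint
  have hbound : ‖∮ z in C((0:ℂ), 1), φ z‖ ≤ 2 * Real.pi * 1 * R :=
    circleIntegral.norm_integral_le_of_norm_le_const zero_le_one hbdry
  rw [hφint] at hbound
  have h2pi : (0:ℝ) < 2 * Real.pi := by positivity
  have hnorm : ‖(2 * Real.pi * Complex.I : ℂ) * σ‖ = 2 * Real.pi * ‖σ‖ := by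
    simp [norm_mul, abs_of_pos Real.pi_pos]
  rw [hnorm] at hbound
  nlinarith
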